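/- Let p₁, …, p_M and q be probability measures on a measurable space X, let p̄ = (1/M)·(p₁ + ⋯ + p_M) denote their uniform mixture, and let F : X → Z be a measurable map into a measurable space Z. Then sup over measurable D : Z → (0, 1) of ( (1/M)·Σ_{i=1}^{M} ∫ log(D(F(x))) dp_i(x) + ∫ log(1 − D(F(x))) dq(x) ) = −2·log 2 + 2·JSD(F_* p̄, F_* q), where F_* denotes the pushforward of a measure along F. -/

import Mathlib

open MeasureTheory Real
open scoped ENNReal

/-- The Kullback–Leibler divergence `KL(p ‖ q) = ∫ log (dp/dq) dp`. -/
noncomputable def klDiv {X : Type*} [MeasurableSpace X] (p q : Measure X) : ℝ :=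
  ∫ x, log ((p.rnDeriv q x).toReal) ∂p

/-- The Jensen–Shannon divergence
`JSD(p, q) = (1/2)·KL(p ‖ m) + (1/2)·KL(q ‖ m)` with `m = (1/2)(p + q)`. -/
noncomputable def jsd {X : Type*} [MeasurableSpace X] (p q : Measure X) : ℝ :=
  (1 / 2) * klDiv p ((2 : ℝ≥0∞)⁻¹ • (p + q)) + (1 / 2) * klDiv q ((2 : ℝ≥0∞)⁻¹ • (p + q))

private lemma integrable_of_bound' {Z : Type*} [MeasurableSpace Z] {ρ : Measure Z}
    [IsFiniteMeasure ρ] {h : Z → ℝ} (hm : AEStronglyMeasurable h ρ) (C : ℝ)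
    (hb : ∀ᵐ z ∂ρ, |h z| ≤ C) : Integrable h ρ :=
  (integrable_const C).mono' hm (by simpa using hb)


private lemma abs_mul_log_le_two {t : ℝ} (h0 : 0 ≤ t) (h2 : t ≤ 2) : |t * log t| ≤ 2 := by
  rcases eq_or_lt_of_le h0 with h | h
  · simp [← h]
  rcases le_total t 1 with h1 | h1
  · have hl0 : log t ≤ 0 := Real.log_nonpos h0 h1
    have hinv : log t⁻¹ ≤ t⁻¹ - 1 := Real.log_le_sub_one_of_pos (by positivity)
    rw [Real.log_inv] at hinv
    have ht' : t * (-log t) ≤ t * (t⁻¹ - 1) := mul_le_mul_of_nonneg_left hinv h0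
    rw [mul_sub, mul_inv_cancel₀ (ne_of_gt h)] at ht'
    rw [abs_of_nonpos (mul_nonpos_of_nonneg_of_nonpos h0 hl0)]
    nlinarith
  · have hl0 : 0 ≤ log t := Real.log_nonneg h1
    have hle : log t ≤ t - 1 := Real.log_le_sub_one_of_pos h
    rw [abs_of_nonneg (mul_nonneg h0 hl0)]
    nlinarith

/-- One-sided optimal discriminator bound. -/
private lemma side_bound {Z : Type*} [MeasurableSpace Z] {ρ m : Measure Z}
    [IsProbabilityMeasure ρ] [IsProbabilityMeasure m] (hρm : ρ ≪ m)
    {E : Z → ℝ} (hE : Measurable E) (hE01 : ∀ z, E z ∈ Set.Ioo (0 : ℝ) 1)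
    (hint : Integrable (fun z => log (E z)) ρ)
    (hintf : Integrable (fun z => log ((ρ.rnDeriv m z).toReal)) ρ) :
    ∫ z, log (E z) ∂ρ ≤
      (∫ z, log ((ρ.rnDeriv m z).toReal) ∂ρ) - log 2 + ((∫ z, 2 * E z ∂m) - 1) := by
  set f : Z → ℝ := fun z => (ρ.rnDeriv m z).toReal with hfdef
  have hfmeas : Measurable f := (Measure.measurable_rnDeriv ρ m).ennreal_toReal
  have hfpos : ∀ᵐ z ∂ρ, 0 < f z := by
    filter_upwards [Measure.rnDeriv_pos hρm,
      hρm.ae_le (Measure.rnDeriv_lt_top ρ m)] with z h1 h2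
    exact ENNReal.toReal_pos h1.ne' h2.ne
  set ψ : Z → ℝ := fun z => 2 * E z / f z with hψdef
  have hψmeas : Measurable ψ := (measurable_const.mul hE).div hfmeas
  have hfψ_bd : ∀ z, |f z * ψ z| ≤ 2 := by
    intro z
    rcases eq_or_ne (f z) 0 with h | h
    · simp [hψdef, h]
    · have : f z * ψ z = 2 * E z := by simp only [hψdef]; field_simp
      rw [this]
      have h1 := (hE01 z).1
      have h2 := (hE01 z).2
      rw [abs_of_nonneg (by linarith)]
      linarith
  have hfψ_int : Integrable (fun z => f z * ψ z) m :=
    integrable_of_bound' ((hfmeas.mul hψmeas).aestronglyMeasurable) 2 (ae_of_all _ hfψ_bd)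
  have hψ_int : Integrable ψ ρ := by
    have := (MeasureTheory.integrable_rnDeriv_smul_iff (f := ψ) hρm).mp (by simpa [smul_eq_mul] using hfψ_int)
    exact this
  have h2E_int : Integrable (fun z => 2 * E z) m := by
    refine integrable_of_bound' ((measurable_const.mul hE).aestronglyMeasurable) 2 (ae_of_all _ ?_)
    intro z
    have h1 := (hE01 z).1
    have h2 := (hE01 z).2
    rw [abs_of_nonneg (by linarith)]
    linarith
  have hψval : ∫ z, ψ z ∂ρ ≤ ∫ z, 2 * E z ∂m := by
    have hcv : ∫ z, f z * ψ z ∂m = ∫ z, ψ z ∂ρ := by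
      simpa [smul_eq_mul] using MeasureTheory.integral_rnDeriv_smul (f := ψ) hρm
    rw [← hcv]
    refine integral_mono hfψ_int h2E_int fun z => ?_
    rcases eq_or_ne (f z) 0 with h | h
    · simp only [hψdef, h, div_zero, mul_zero]
      have := (hE01 z).1; linarith
    · have : f z * ψ z = 2 * E z := by simp only [hψdef]; field_simp
      rw [this]
  have hpt : ∀ᵐ z ∂ρ, log (E z) ≤ log (f z) - log 2 + (ψ z - 1) := by
    filter_upwards [hfpos] with z hfz
    have hEz := (hE01 z).1
    have hψpos : 0 < ψ z := by
      apply div_pos (by linarith) hfz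
    have hlog : log (ψ z) ≤ ψ z - 1 := Real.log_le_sub_one_of_pos hψpos
    have hexp : log (ψ z) = log 2 + log (E z) - log (f z) := by
      rw [hψdef]
      rw [Real.log_div (by positivity) (ne_of_gt hfz), Real.log_mul (by norm_num) (ne_of_gt hEz)]
    linarith
  have hR_int : Integrable (fun z => log (f z) - log 2 + (ψ z - 1)) ρ :=
    (hintf.sub (integrable_const _)).add (hψ_int.sub (integrable_const _))
  have := integral_mono_ae hint hR_int hpt
  have heq : ∫ a, (log (f a) - log 2 + (ψ a - 1)) ∂ρ
      = (∫ a, log (f a) ∂ρ) - log 2 + ((∫ a, ψ a ∂ρ) - 1) := by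
    have hA : Integrable (fun a => log (f a) - log 2) ρ := hintf.sub (integrable_const _)
    have hB : Integrable (fun a => ψ a - 1) ρ := hψ_int.sub (integrable_const _)
    rw [integral_add hA hB,
      integral_sub hintf (integrable_const _), integral_sub hψ_int (integrable_const _),
      integral_const, integral_const]
    simp [measure_univ]; rfl
  rw [heq] at this
  linarith [hψval]

private lemma sup_eq_jsd {Z : Type*} [MeasurableSpace Z]
    (μ ν : Measure Z) [IsProbabilityMeasure μ] [IsProbabilityMeasure ν] :
    sSup {r : ℝ | ∃ D : Z → ℝ, Measurable D ∧ (∀ z, D z ∈ Set.Ioo (0 : ℝ) 1) ∧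
        Integrable (fun z => log (D z)) μ ∧ Integrable (fun z => log (1 - D z)) ν ∧
        r = (∫ z, log (D z) ∂μ) + ∫ z, log (1 - D z) ∂ν} =
      -2 * log 2 + 2 * jsd μ ν := by
  set m : Measure Z := (2 : ℝ≥0∞)⁻¹ • (μ + ν) with hm
  haveI hmprob : IsProbabilityMeasure m := by
    constructor
    rw [hm]
    simp only [Measure.smul_apply, Measure.add_apply, measure_univ, smul_eq_mul]
    rw [one_add_one_eq_two, ENNReal.inv_mul_cancel two_ne_zero ENNReal.ofNat_ne_top]
  have hμm : μ ≪ m := by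
    have h1 : μ ≪ μ + ν := by
      refine Measure.AbsolutelyContinuous.mk fun s hs h0 => ?_
      simp only [Measure.add_apply, add_eq_zero] at h0
      exact h0.1
    have h2 : (μ + ν) ≪ m := hm ▸ Measure.absolutelyContinuous_smul (by simp)
    exact h1.trans h2
  have hνm : ν ≪ m := by
    have h1 : ν ≪ μ + ν := by
      refine Measure.AbsolutelyContinuous.mk fun s hs h0 => ?_
      simp only [Measure.add_apply, add_eq_zero] at h0
      exact h0.2
    have h2 : (μ + ν) ≪ m := hm ▸ Measure.absolutelyContinuous_smul (by simp)
    exact h1.trans h2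
  have hfmeas : Measurable (fun z => (μ.rnDeriv m z).toReal) :=
    (Measure.measurable_rnDeriv μ m).ennreal_toReal
  have hgmeas : Measurable (fun z => (ν.rnDeriv m z).toReal) :=
    (Measure.measurable_rnDeriv ν m).ennreal_toReal
  -- densities sum to 2
  have h2m : μ + ν = (2 : ℝ≥0∞) • m := by
    rw [hm, smul_smul, ENNReal.mul_inv_cancel two_ne_zero ENNReal.ofNat_ne_top, one_smul]
  have hae2 : ∀ᵐ z ∂m, μ.rnDeriv m z + ν.rnDeriv m z = 2 := by
    have hadd : ((2 : ℝ≥0∞) • m).rnDeriv m =ᵐ[m] μ.rnDeriv m + ν.rnDeriv m :=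
      h2m ▸ Measure.rnDeriv_add' μ ν m
    have hsm : ((2 : ℝ≥0∞) • m).rnDeriv m =ᵐ[m] (2 : ℝ≥0∞) • m.rnDeriv m :=
      Measure.rnDeriv_smul_left_of_ne_top m m ENNReal.ofNat_ne_top
    filter_upwards [hadd, hsm, Measure.rnDeriv_self m] with z h1 h2 h3
    simp only [Pi.add_apply, Pi.smul_apply, Pi.one_apply, smul_eq_mul] at h1 h2 h3
    rw [← h1, h2, h3, mul_one]
  have hreal : ∀ᵐ z ∂m, (μ.rnDeriv m z).toReal + (ν.rnDeriv m z).toReal = 2 ∧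
      (μ.rnDeriv m z).toReal ≤ 2 ∧ (ν.rnDeriv m z).toReal ≤ 2 := by
    filter_upwards [hae2] with z hz
    have hμ2 : μ.rnDeriv m z ≤ 2 := by rw [← hz]; exact le_self_add
    have hν2 : ν.rnDeriv m z ≤ 2 := by rw [← hz]; exact le_add_self
    have hμt : μ.rnDeriv m z ≠ ∞ := ne_top_of_le_ne_top ENNReal.ofNat_ne_top hμ2
    have hνt : ν.rnDeriv m z ≠ ∞ := ne_top_of_le_ne_top ENNReal.ofNat_ne_top hν2
    refine ⟨?_, ?_, ?_⟩
    · rw [← ENNReal.toReal_add hμt hνt, hz]; simp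
    · simpa using ENNReal.toReal_mono ENNReal.ofNat_ne_top hμ2
    · simpa using ENNReal.toReal_mono ENNReal.ofNat_ne_top hν2
  have hfposμ : ∀ᵐ z ∂μ, 0 < (μ.rnDeriv m z).toReal := by
    filter_upwards [Measure.rnDeriv_pos hμm, hμm.ae_le (Measure.rnDeriv_lt_top μ m)] with z h1 h2
    exact ENNReal.toReal_pos h1.ne' h2.ne
  have hgposν : ∀ᵐ z ∂ν, 0 < (ν.rnDeriv m z).toReal := by
    filter_upwards [Measure.rnDeriv_pos hνm, hνm.ae_le (Measure.rnDeriv_lt_top ν m)] with z h1 h2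
    exact ENNReal.toReal_pos h1.ne' h2.ne
  -- KL integrands are integrable
  have hintf : Integrable (fun z => log ((μ.rnDeriv m z).toReal)) μ := by
    refine (MeasureTheory.integrable_rnDeriv_smul_iff (f := fun z => log ((μ.rnDeriv m z).toReal)) hμm).mp ?_
    refine integrable_of_bound' ?_ 2 ?_
    · exact (hfmeas.mul (Real.measurable_log.comp hfmeas)).aestronglyMeasurable
    · filter_upwards [hreal] with z hz
      simpa [smul_eq_mul] using abs_mul_log_le_two ENNReal.toReal_nonneg hz.2.1
  have hintg : Integrable (fun z => log ((ν.rnDeriv m z).toReal)) ν := by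
    refine (MeasureTheory.integrable_rnDeriv_smul_iff (f := fun z => log ((ν.rnDeriv m z).toReal)) hνm).mp ?_
    refine integrable_of_bound' ?_ 2 ?_
    · exact (hgmeas.mul (Real.measurable_log.comp hgmeas)).aestronglyMeasurable
    · filter_upwards [hreal] with z hz
      simpa [smul_eq_mul] using abs_mul_log_le_two ENNReal.toReal_nonneg hz.2.2
  -- the value of the RHS
  have hRHS : -2 * log 2 + 2 * jsd μ ν =
      (∫ z, log ((μ.rnDeriv m z).toReal) ∂μ) + (∫ z, log ((ν.rnDeriv m z).toReal) ∂ν)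
        - 2 * log 2 := by
    simp only [jsd, klDiv, ← hm]
    ring
  -- upper bound
  have hub : ∀ r ∈ {r : ℝ | ∃ D : Z → ℝ, Measurable D ∧ (∀ z, D z ∈ Set.Ioo (0 : ℝ) 1) ∧
      Integrable (fun z => log (D z)) μ ∧ Integrable (fun z => log (1 - D z)) ν ∧
      r = (∫ z, log (D z) ∂μ) + ∫ z, log (1 - D z) ∂ν},
      r ≤ (∫ z, log ((μ.rnDeriv m z).toReal) ∂μ) + (∫ z, log ((ν.rnDeriv m z).toReal) ∂ν)
        - 2 * log 2 := by
    rintro r ⟨D, hD, hD01, hi1, hi2, rfl⟩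
    have h1 : ∫ z, log (D z) ∂μ ≤
        (∫ z, log ((μ.rnDeriv m z).toReal) ∂μ) - log 2 + ((∫ z, 2 * D z ∂m) - 1) :=
      side_bound hμm hD hD01 hi1 hintf
    have h2 : ∫ z, log (1 - D z) ∂ν ≤
        (∫ z, log ((ν.rnDeriv m z).toReal) ∂ν) - log 2 + ((∫ z, 2 * (1 - D z) ∂m) - 1) :=
      side_bound hνm (measurable_const.sub hD)
        (fun z => ⟨by have := (hD01 z).2; simpa using by linarith,
                   by have := (hD01 z).1; linarith⟩) hi2 hintg
    have hint1 : Integrable (fun z => 2 * D z) m := by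
      refine integrable_of_bound' (measurable_const.mul hD).aestronglyMeasurable 2 (ae_of_all _ fun z => ?_)
      have h := hD01 z
      rw [abs_of_nonneg (by have := h.1; linarith)]
      have := h.2; linarith
    have hint2 : Integrable (fun z => 2 * (1 - D z)) m := by
      refine integrable_of_bound' (measurable_const.mul (measurable_const.sub hD)).aestronglyMeasurable 2 (ae_of_all _ fun z => ?_)
      have h := hD01 z
      rw [abs_of_nonneg (by have := h.2; linarith)]
      have := h.1; linarith
    have hsum2 : (∫ z, 2 * D z ∂m) + (∫ z, 2 * (1 - D z) ∂m) = 2 := by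
      rw [← integral_add hint1 hint2]
      have : (fun z => 2 * D z + 2 * (1 - D z)) = fun _ : Z => (2 : ℝ) := by
        funext z; ring
      rw [this, integral_const]
      simp [measure_univ]
    linarith
  -- nonempty and bounded above
  have hne : ∃ x, x ∈ {r : ℝ | ∃ D : Z → ℝ, Measurable D ∧ (∀ z, D z ∈ Set.Ioo (0 : ℝ) 1) ∧
      Integrable (fun z => log (D z)) μ ∧ Integrable (fun z => log (1 - D z)) ν ∧
      r = (∫ z, log (D z) ∂μ) + ∫ z, log (1 - D z) ∂ν} :=
    ⟨_, ⟨fun _ => (1 : ℝ)/2, measurable_const, fun z => by norm_num,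
      by exact integrable_const _, by exact integrable_const _, rfl⟩⟩
  have hbdd : BddAbove {r : ℝ | ∃ D : Z → ℝ, Measurable D ∧ (∀ z, D z ∈ Set.Ioo (0 : ℝ) 1) ∧
      Integrable (fun z => log (D z)) μ ∧ Integrable (fun z => log (1 - D z)) ν ∧
      r = (∫ z, log (D z) ∂μ) + ∫ z, log (1 - D z) ∂ν} :=
    ⟨_, fun r hr => hub r hr⟩
  -- lower bound
  have hlb : ∀ δ : ℝ, 0 < δ →
      (∫ z, log ((μ.rnDeriv m z).toReal) ∂μ) + (∫ z, log ((ν.rnDeriv m z).toReal) ∂ν)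
        - 2 * log 2 - δ ≤ sSup {r : ℝ | ∃ D : Z → ℝ, Measurable D ∧
          (∀ z, D z ∈ Set.Ioo (0 : ℝ) 1) ∧
          Integrable (fun z => log (D z)) μ ∧ Integrable (fun z => log (1 - D z)) ν ∧
          r = (∫ z, log (D z) ∂μ) + ∫ z, log (1 - D z) ∂ν} := by
    intro δ hδ
    set ε : ℝ := (1 - exp (-δ/2))/2 with hεdef
    have hexp1 : exp (-δ/2) < 1 := Real.exp_lt_one_iff.2 (by linarith)
    have hexp0 : 0 < exp (-δ/2) := Real.exp_pos _
    have hε0 : 0 < ε := by rw [hεdef]; linarith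
    have h12 : 1 - 2*ε = exp (-δ/2) := by rw [hεdef]; ring
    have h12pos : 0 < 1 - 2*ε := by rw [h12]; exact hexp0
    set D : Z → ℝ := fun z => ε + (1 - 2*ε) * (min ((μ.rnDeriv m z).toReal) 2 / 2) with hDdef
    have htb : ∀ z, 0 ≤ min ((μ.rnDeriv m z).toReal) 2 / 2 ∧
        min ((μ.rnDeriv m z).toReal) 2 / 2 ≤ 1 := fun z =>
      ⟨div_nonneg (le_min ENNReal.toReal_nonneg (by norm_num)) (by norm_num),
        by rw [div_le_one (by norm_num)]; exact min_le_right _ _⟩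
    have hDb : ∀ z, ε ≤ D z ∧ D z ≤ 1 - ε := by
      intro z
      obtain ⟨h0, h1⟩ := htb z
      constructor
      · simp only [hDdef]; nlinarith
      · simp only [hDdef]; nlinarith
    have hD01 : ∀ z, D z ∈ Set.Ioo (0 : ℝ) 1 := fun z =>
      ⟨lt_of_lt_of_le hε0 (hDb z).1, lt_of_le_of_lt (hDb z).2 (by linarith)⟩
    have hDmeas : Measurable D :=
      measurable_const.add (((hfmeas.min measurable_const).div_const 2).const_mul _)
    have hlogε : log ε < 0 := Real.log_neg hε0 (by linarith)
    have hlogD_int : Integrable (fun z => log (D z)) μ := by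
      refine integrable_of_bound' (Real.measurable_log.comp hDmeas).aestronglyMeasurable
        (-log ε) (ae_of_all _ fun z => ?_)
      obtain ⟨hl, hu⟩ := hDb z
      rw [abs_le]
      refine ⟨by simpa using Real.log_le_log hε0 hl, ?_⟩
      have h1 : log (D z) ≤ log (1 - ε) := Real.log_le_log (lt_of_lt_of_le hε0 hl) hu
      have h2 : log (1 - ε) ≤ 0 := Real.log_nonpos (by linarith) (by linarith)
      linarith
    have hlog1D_int : Integrable (fun z => log (1 - D z)) ν := by
      refine integrable_of_bound' (Real.measurable_log.comp
        (measurable_const.sub hDmeas)).aestronglyMeasurable (-log ε) (ae_of_all _ fun z => ?_)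
      obtain ⟨hl, hu⟩ := hDb z
      rw [abs_le]
      refine ⟨by simpa using Real.log_le_log hε0 (by linarith : ε ≤ 1 - D z), ?_⟩
      have h1 : log (1 - D z) ≤ log (1 - ε) := Real.log_le_log (by linarith) (by linarith)
      have h2 : log (1 - ε) ≤ 0 := Real.log_nonpos (by linarith) (by linarith)
      linarith
    have hmono1 : ∀ᵐ z ∂μ, log (1 - 2*ε) + (log ((μ.rnDeriv m z).toReal) - log 2)
        ≤ log (D z) := by
      filter_upwards [hfposμ, hμm.ae_le hreal] with z h0 hz
      obtain ⟨hfg, hf2, hg2⟩ := hz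
      have hmin : min ((μ.rnDeriv m z).toReal) 2 = (μ.rnDeriv m z).toReal := min_eq_left hf2
      have hDz : (1 - 2*ε) * ((μ.rnDeriv m z).toReal / 2) ≤ D z := by
        simp only [hDdef, hmin]; nlinarith
      have hpos : 0 < (1 - 2*ε) * ((μ.rnDeriv m z).toReal / 2) :=
        mul_pos h12pos (by linarith)
      have hexp : log ((1 - 2*ε) * ((μ.rnDeriv m z).toReal / 2))
          = log (1 - 2*ε) + (log ((μ.rnDeriv m z).toReal) - log 2) := by
        rw [Real.log_mul (ne_of_gt h12pos) (by positivity),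
          Real.log_div (ne_of_gt h0) (by norm_num)]
      rw [← hexp]
      exact Real.log_le_log hpos hDz
    have hmono2 : ∀ᵐ z ∂ν, log (1 - 2*ε) + (log ((ν.rnDeriv m z).toReal) - log 2)
        ≤ log (1 - D z) := by
      filter_upwards [hgposν, hνm.ae_le hreal] with z h0 hz
      obtain ⟨hfg, hf2, hg2⟩ := hz
      have hmin : min ((μ.rnDeriv m z).toReal) 2 = (μ.rnDeriv m z).toReal := min_eq_left hf2
      have hDz : (1 - 2*ε) * ((ν.rnDeriv m z).toReal / 2) ≤ 1 - D z := by
        simp only [hDdef, hmin]; nlinarith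
      have hpos : 0 < (1 - 2*ε) * ((ν.rnDeriv m z).toReal / 2) :=
        mul_pos h12pos (by linarith)
      have hexp : log ((1 - 2*ε) * ((ν.rnDeriv m z).toReal / 2))
          = log (1 - 2*ε) + (log ((ν.rnDeriv m z).toReal) - log 2) := by
        rw [Real.log_mul (ne_of_gt h12pos) (by positivity),
          Real.log_div (ne_of_gt h0) (by norm_num)]
      rw [← hexp]
      exact Real.log_le_log hpos hDz
    have hA : Integrable (fun z => log ((μ.rnDeriv m z).toReal) - log 2) μ :=
      hintf.sub (integrable_const _)
    have hB : Integrable (fun z => log ((ν.rnDeriv m z).toReal) - log 2) ν :=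
      hintg.sub (integrable_const _)
    have hv1 : log (1 - 2*ε) + ((∫ z, log ((μ.rnDeriv m z).toReal) ∂μ) - log 2)
        ≤ ∫ z, log (D z) ∂μ := by
      have h := integral_mono_ae ((integrable_const _).add hA) hlogD_int hmono1
      simp only [Pi.add_apply] at h
      have heq : ∫ z, (log (1 - 2*ε) + (log ((μ.rnDeriv m z).toReal) - log 2)) ∂μ
          = log (1 - 2*ε) + ((∫ z, log ((μ.rnDeriv m z).toReal) ∂μ) - log 2) := by
        rw [integral_add (integrable_const _) hA, integral_sub hintf (integrable_const _),
          integral_const, integral_const]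
        simp [measure_univ]
      rwa [heq] at h
    have hv2 : log (1 - 2*ε) + ((∫ z, log ((ν.rnDeriv m z).toReal) ∂ν) - log 2)
        ≤ ∫ z, log (1 - D z) ∂ν := by
      have h := integral_mono_ae ((integrable_const _).add hB) hlog1D_int hmono2
      simp only [Pi.add_apply] at h
      have heq : ∫ z, (log (1 - 2*ε) + (log ((ν.rnDeriv m z).toReal) - log 2)) ∂ν
          = log (1 - 2*ε) + ((∫ z, log ((ν.rnDeriv m z).toReal) ∂ν) - log 2) := by
        rw [integral_add (integrable_const _) hB, integral_sub hintg (integrable_const _),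
          integral_const, integral_const]
        simp [measure_univ]
      rwa [heq] at h
    have hmem : (∫ z, log (D z) ∂μ) + (∫ z, log (1 - D z) ∂ν) ∈
        {r : ℝ | ∃ D : Z → ℝ, Measurable D ∧ (∀ z, D z ∈ Set.Ioo (0 : ℝ) 1) ∧
          Integrable (fun z => log (D z)) μ ∧ Integrable (fun z => log (1 - D z)) ν ∧
          r = (∫ z, log (D z) ∂μ) + ∫ z, log (1 - D z) ∂ν} :=
      ⟨D, hDmeas, hD01, hlogD_int, hlog1D_int, rfl⟩
    have hle := le_csSup hbdd hmem
    have hlogeps : log (1 - 2*ε) = -δ/2 := by rw [h12, Real.log_exp]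
    linarith
  rw [hRHS]
  refine le_antisymm (csSup_le hne hub) (not_lt.1 fun hcon => ?_)
  have h := hlb (((∫ z, log ((μ.rnDeriv m z).toReal) ∂μ)
      + (∫ z, log ((ν.rnDeriv m z).toReal) ∂ν) - 2 * log 2
      - sSup {r : ℝ | ∃ D : Z → ℝ, Measurable D ∧ (∀ z, D z ∈ Set.Ioo (0 : ℝ) 1) ∧
          Integrable (fun z => log (D z)) μ ∧ Integrable (fun z => log (1 - D z)) ν ∧
          r = (∫ z, log (D z) ∂μ) + ∫ z, log (1 - D z) ∂ν}) / 2) (by linarith)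
  linarith

/-- Theorem 2 of the paper: with sources `p₁, …, p_M`, target `q`, and feature extractor
`F`, the supremum over measurable discriminators `D : Z → (0,1)` of the multi-source
adversarial objective `(1/M)·Σᵢ ∫ log (D ∘ F) dpᵢ + ∫ log (1 - D ∘ F) dq` equals
`-2·log 2 + 2·JSD(F_* p̄, F_* q)`, where `p̄ = (1/M)(p₁ + ⋯ + p_M)`. -/
theorem multisource_adversarial_sup_eq_jsd {X Z : Type*}
    [MeasurableSpace X] [MeasurableSpace Z]
    (M : ℕ) (hM : 1 ≤ M) (p : Fin M → Measure X) (q : Measure X)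
    (hp : ∀ i, IsProbabilityMeasure (p i)) [IsProbabilityMeasure q]
    (pbar : Measure X) (hpbar : pbar = (M : ℝ≥0∞)⁻¹ • ∑ i, p i)
    (F : X → Z) (hF : Measurable F) :
    sSup {r : ℝ | ∃ D : Z → ℝ, Measurable D ∧ (∀ z, D z ∈ Set.Ioo (0 : ℝ) 1) ∧
        (∀ i, Integrable (fun x => log (D (F x))) (p i)) ∧
        Integrable (fun x => log (1 - D (F x))) q ∧
        r = (M : ℝ)⁻¹ * (∑ i, ∫ x, log (D (F x)) ∂(p i)) +
              ∫ x, log (1 - D (F x)) ∂q} =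
      -2 * log 2 + 2 * jsd (pbar.map F) (q.map F) := by
  have hM0 : (M : ℝ≥0∞) ≠ 0 := Nat.cast_ne_zero.2 (by omega)
  have hMt : (M : ℝ≥0∞) ≠ ∞ := ENNReal.natCast_ne_top M
  have hMinv0 : (M : ℝ≥0∞)⁻¹ ≠ 0 := ENNReal.inv_ne_zero.2 hMt
  have hMinvt : (M : ℝ≥0∞)⁻¹ ≠ ∞ := ENNReal.inv_ne_top.2 hM0
  haveI hpbar_prob : IsProbabilityMeasure pbar := by
    constructor
    rw [hpbar]
    simp only [Measure.smul_apply, smul_eq_mul]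
    rw [Measure.finset_sum_apply]
    rw [Finset.sum_congr rfl fun i _ => (hp i).measure_univ]
    simp only [Finset.sum_const, Finset.card_univ, Fintype.card_fin, nsmul_eq_mul, mul_one]
    exact ENNReal.inv_mul_cancel hM0 hMt
  haveI : IsProbabilityMeasure (pbar.map F) := Measure.isProbabilityMeasure_map hF.aemeasurable
  haveI : IsProbabilityMeasure (q.map F) := Measure.isProbabilityMeasure_map hF.aemeasurable
  -- transfer lemmas
  have htrans1 : ∀ (D : Z → ℝ), Measurable D →
      (Integrable (fun z => log (D z)) (pbar.map F) ↔
        ∀ i, Integrable (fun x => log (D (F x))) (p i)) := by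
    intro D hD
    have hsm : AEStronglyMeasurable (fun z => log (D z)) (pbar.map F) :=
      (Real.measurable_log.comp hD).aestronglyMeasurable
    rw [integrable_map_measure hsm hF.aemeasurable]
    rw [hpbar, integrable_smul_measure hMinv0 hMinvt, integrable_finset_sum_measure]
    simp only [Finset.mem_univ, forall_true_left, Function.comp_def]
  have htrans2 : ∀ (D : Z → ℝ), Measurable D →
      (Integrable (fun z => log (1 - D z)) (q.map F) ↔
        Integrable (fun x => log (1 - D (F x))) q) := by
    intro D hD
    exact integrable_map_measure
      (Real.measurable_log.comp (measurable_const.sub hD)).aestronglyMeasurable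
      hF.aemeasurable
  have hval1 : ∀ (D : Z → ℝ), Measurable D →
      (∀ i, Integrable (fun x => log (D (F x))) (p i)) →
      ∫ z, log (D z) ∂(pbar.map F) = (M : ℝ)⁻¹ * ∑ i, ∫ x, log (D (F x)) ∂(p i) := by
    intro D hD hi
    have hsm : AEStronglyMeasurable (fun z => log (D z)) (pbar.map F) :=
      (Real.measurable_log.comp hD).aestronglyMeasurable
    rw [integral_map hF.aemeasurable hsm]
    rw [hpbar, integral_smul_measure, integral_finset_sum_measure fun i _ => hi i]
    simp [ENNReal.toReal_inv]
  have hval2 : ∀ (D : Z → ℝ), Measurable D →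
      ∫ z, log (1 - D z) ∂(q.map F) = ∫ x, log (1 - D (F x)) ∂q := by
    intro D hD
    exact integral_map hF.aemeasurable
      (Real.measurable_log.comp (measurable_const.sub hD)).aestronglyMeasurable
  have hset : {r : ℝ | ∃ D : Z → ℝ, Measurable D ∧ (∀ z, D z ∈ Set.Ioo (0 : ℝ) 1) ∧
        (∀ i, Integrable (fun x => log (D (F x))) (p i)) ∧
        Integrable (fun x => log (1 - D (F x))) q ∧
        r = (M : ℝ)⁻¹ * (∑ i, ∫ x, log (D (F x)) ∂(p i)) +
              ∫ x, log (1 - D (F x)) ∂q} =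
      {r : ℝ | ∃ D : Z → ℝ, Measurable D ∧ (∀ z, D z ∈ Set.Ioo (0 : ℝ) 1) ∧
        Integrable (fun z => log (D z)) (pbar.map F) ∧
        Integrable (fun z => log (1 - D z)) (q.map F) ∧
        r = (∫ z, log (D z) ∂(pbar.map F)) + ∫ z, log (1 - D z) ∂(q.map F)} := by
    ext r
    simp only [Set.mem_setOf_eq]
    constructor
    · rintro ⟨D, hD, hD01, hi1, hi2, rfl⟩
      exact ⟨D, hD, hD01, (htrans1 D hD).2 hi1, (htrans2 D hD).2 hi2,
        by rw [hval1 D hD hi1, hval2 D hD]⟩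
    · rintro ⟨D, hD, hD01, hi1, hi2, rfl⟩
      exact ⟨D, hD, hD01, (htrans1 D hD).1 hi1, (htrans2 D hD).1 hi2,
        by rw [hval1 D hD ((htrans1 D hD).1 hi1), hval2 D hD]⟩
  rw [hset]
  exact sup_eq_jsd _ _
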